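/- Almost negative definiteness of the logarithmic interaction matrix on the zero-sum hyperplane: let γ>1. There exists a constant C>0 (depending only on γ) such that for every N≥2 and every η∈ℝ^N with |η_a−η_b| ≥ N^{−γ} for all a≠b, the N×N matrix M with entries M_{kj} = (1/N)·ln|η_k−η_j| for k≠j and M_{kk}=0 satisfies ⟨x, M x⟩ ≤ C·(ln N / N)·‖x‖² for all x∈ℝ^N with ∑_{k=1}^N x_k = 0, where ⟨·,·⟩ is the standard Euclidean inner product and ‖·‖ the Euclidean norm. -/

import Mathlib

open MeasureTheory Set

lemma indicator_prod_integral (a b s : ℝ) :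
    ∫ u : ℝ, (Ioc a (a+s)).indicator (1 : ℝ → ℝ) u * (Ioc b (b+s)).indicator 1 u
      = max (s - |a - b|) 0 := by
  calc ∫ u : ℝ, (Ioc a (a+s)).indicator (1 : ℝ → ℝ) u * (Ioc b (b+s)).indicator 1 u
      = ∫ u : ℝ, (Ioc (a ⊔ b) ((a+s) ⊓ (b+s))).indicator (1 : ℝ → ℝ) u := by
        congr 1; funext u
        rw [← Ioc_inter_Ioc, Set.inter_indicator_one, Pi.mul_apply]
    _ = (volume (Ioc (a ⊔ b) ((a+s) ⊓ (b+s)))).toReal :=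
        integral_indicator_one measurableSet_Ioc
    _ = max (s - |a - b|) 0 := by
        rw [Real.volume_Ioc, ENNReal.toReal_ofReal']
        congr 1
        have h1 : (a+s) ⊓ (b+s) = a ⊓ b + s := min_add_add_right a b s
        have h2 : a ⊔ b - a ⊓ b = |a - b| := (abs_sub_comm a b ▸ max_sub_min_eq_abs a b)
        linarith

lemma triangle_psd {N : ℕ} (x η : Fin N → ℝ) (s : ℝ) :
    0 ≤ ∑ k : Fin N, ∑ j : Fin N, x k * x j * max (s - |η k - η j|) 0 := by
  set I : Fin N → Set ℝ := fun k => Ioc (η k) (η k + s) with hI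
  have hrw : ∀ k j : Fin N, (fun u : ℝ => (x k * (I k).indicator (1:ℝ→ℝ) u) *
      (x j * (I j).indicator (1:ℝ→ℝ) u))
      = fun u => (x k * x j) * ((I k ∩ I j).indicator (1:ℝ→ℝ) u) := by
    intro k j; funext u; rw [Set.inter_indicator_one, Pi.mul_apply]; ring
  have hint : ∀ k j : Fin N, Integrable (fun u : ℝ =>
      (x k * (I k).indicator (1:ℝ→ℝ) u) * (x j * (I j).indicator (1:ℝ→ℝ) u)) := by
    intro k j
    rw [hrw k j]
    refine Integrable.const_mul ?_ _
    rw [integrable_indicator_iff (measurableSet_Ioc.inter measurableSet_Ioc)]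
    refine integrableOn_const (ne_of_lt ?_)
    exact lt_of_le_of_lt (measure_mono inter_subset_left) measure_Ioc_lt_top
  have h0 : 0 ≤ ∫ u : ℝ, (∑ k, x k * (I k).indicator (1:ℝ→ℝ) u)^2 :=
    integral_nonneg fun u => sq_nonneg _
  have hexp : ∫ u : ℝ, (∑ k, x k * (I k).indicator (1:ℝ→ℝ) u)^2
      = ∑ k : Fin N, ∑ j : Fin N, ∫ u : ℝ,
        (x k * (I k).indicator (1:ℝ→ℝ) u) * (x j * (I j).indicator (1:ℝ→ℝ) u) := by
    have hpt : ∀ u : ℝ, (∑ k, x k * (I k).indicator (1:ℝ→ℝ) u)^2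
        = ∑ k : Fin N, ∑ j : Fin N,
          (x k * (I k).indicator (1:ℝ→ℝ) u) * (x j * (I j).indicator (1:ℝ→ℝ) u) := by
      intro u; rw [sq, Finset.sum_mul_sum]
    simp_rw [hpt]
    rw [integral_finset_sum _ fun k _ => integrable_finset_sum _ fun j _ => hint k j]
    exact Finset.sum_congr rfl fun k _ => integral_finset_sum _ fun j _ => hint k j
  have hval : ∀ k j : Fin N, (∫ u : ℝ,
      (x k * (I k).indicator (1:ℝ→ℝ) u) * (x j * (I j).indicator (1:ℝ→ℝ) u))
      = x k * x j * max (s - |η k - η j|) 0 := by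
    intro k j
    rw [hrw k j]
    have : (fun u : ℝ => (x k * x j) * ((I k ∩ I j).indicator (1:ℝ→ℝ) u))
        = fun u => (x k * x j) * ((I k).indicator (1:ℝ→ℝ) u * (I j).indicator (1:ℝ→ℝ) u) := by
      funext u; rw [Set.inter_indicator_one, Pi.mul_apply]
    rw [this, MeasureTheory.integral_const_mul, hI]
    simp only []
    rw [indicator_prod_integral (η k) (η j) s]
  calc (0:ℝ) ≤ _ := h0
    _ = _ := hexp
    _ = ∑ k : Fin N, ∑ j : Fin N, x k * x j * max (s - |η k - η j|) 0 :=
      Finset.sum_congr rfl fun k _ => Finset.sum_congr rfl fun j _ => hval k j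

lemma min_cnd {N : ℕ} (x η : Fin N → ℝ) (hx : ∑ k, x k = 0) (s : ℝ) :
    ∑ k : Fin N, ∑ j : Fin N, x k * x j * min |η k - η j| s ≤ 0 := by
  have hpt : ∀ k j : Fin N, x k * x j * min |η k - η j| s
      = x k * x j * s - x k * x j * max (s - |η k - η j|) 0 := by
    intro k j
    have : min |η k - η j| s = s - max (s - |η k - η j|) 0 := by
      rcases le_total |η k - η j| s with h | h
      · rw [min_eq_left h, max_eq_left (by linarith)]; ring
      · rw [min_eq_right h, max_eq_right (by linarith)]; ring
    rw [this]; ring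
  simp_rw [hpt, Finset.sum_sub_distrib]
  have h1 : ∑ k : Fin N, ∑ j : Fin N, x k * x j * s = 0 := by
    have : ∑ k : Fin N, ∑ j : Fin N, x k * x j * s
        = (∑ k, x k) * (∑ j, x j) * s := by
      rw [Finset.sum_mul_sum, Finset.sum_mul]
      exact Finset.sum_congr rfl fun k _ => by rw [Finset.sum_mul]
    rw [this, hx]; ring
  rw [h1]
  have := triangle_psd x η s
  linarith

lemma rpow_neg_two_eq {s : ℝ} (hs : 0 < s) : s ^ (-2 : ℝ) = (s^2)⁻¹ := by
  rw [Real.rpow_neg hs.le, show ((2:ℝ) = ((2:ℕ):ℝ)) by norm_num, Real.rpow_natCast]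

lemma integrableOn_min_div {δ t : ℝ} (hδ : 0 < δ) (ht : 0 ≤ t) :
    IntegrableOn (fun s : ℝ => min t s / s^2) (Ioi δ) := by
  have hg : IntegrableOn (fun s : ℝ => t * s ^ (-2 : ℝ)) (Ioi δ) :=
    (integrableOn_Ioi_rpow_of_lt (by norm_num) hδ).const_mul t
  refine Integrable.mono' hg ?_ ?_
  · refine (ContinuousOn.div ?_ ?_ ?_).aestronglyMeasurable measurableSet_Ioi
    · exact (continuous_const.min continuous_id).continuousOn
    · exact (continuous_pow 2).continuousOn
    · intro s hs
      exact pow_ne_zero 2 (lt_trans hδ (mem_Ioi.mp hs)).ne'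
  · refine (ae_restrict_iff' measurableSet_Ioi).2 (Filter.Eventually.of_forall fun s hs => ?_)
    have hs0 : 0 < s := lt_trans hδ (mem_Ioi.mp hs)
    rw [rpow_neg_two_eq hs0]
    rw [Real.norm_eq_abs, abs_div, abs_of_nonneg (le_min ht hs0.le), abs_of_nonneg (sq_nonneg s)]
    rw [div_eq_mul_inv]
    exact mul_le_mul_of_nonneg_right (min_le_left _ _) (inv_nonneg.2 (sq_nonneg s))

lemma min_div_integral {δ t : ℝ} (hδ : 0 < δ) (ht : δ ≤ t) :
    ∫ s in Ioi δ, min t s / s^2 = Real.log t - Real.log δ + 1 := by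
  have htpos : 0 < t := lt_of_lt_of_le hδ ht
  have hsplit : Ioc δ t ∪ Ioi t = Ioi δ := Ioc_union_Ioi_eq_Ioi ht
  have hf := integrableOn_min_div hδ htpos.le
  have hf1 : IntegrableOn (fun s : ℝ => min t s / s^2) (Ioc δ t) :=
    hf.mono_set Ioc_subset_Ioi_self
  have hf2 : IntegrableOn (fun s : ℝ => min t s / s^2) (Ioi t) :=
    hf.mono_set (Ioi_subset_Ioi ht)
  rw [← hsplit, setIntegral_union Ioc_disjoint_Ioi_same measurableSet_Ioi hf1 hf2]
  have hI1 : ∫ s in Ioc δ t, min t s / s^2 = Real.log t - Real.log δ := by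
    rw [setIntegral_congr_fun measurableSet_Ioc (g := fun s : ℝ => s⁻¹) ?_]
    · rw [← intervalIntegral.integral_of_le ht, integral_inv_of_pos hδ htpos,
        Real.log_div (ne_of_gt htpos) (ne_of_gt hδ)]
    · intro s hs
      have hs0 : 0 < s := lt_of_lt_of_le hδ (le_of_lt hs.1)
      simp only []
      rw [min_eq_right hs.2, sq]
      field_simp
  have hI2 : ∫ s in Ioi t, min t s / s^2 = 1 := by
    rw [setIntegral_congr_fun measurableSet_Ioi (g := fun s : ℝ => t * s ^ (-2:ℝ)) ?_]
    · rw [MeasureTheory.integral_const_mul, integral_Ioi_rpow_of_lt (by norm_num) htpos]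
      rw [show (-2:ℝ) + 1 = -1 by norm_num, Real.rpow_neg_one]
      field_simp
    · intro s hs
      have hst : t ≤ s := le_of_lt (mem_Ioi.mp hs)
      have hs0 : 0 < s := lt_trans htpos (mem_Ioi.mp hs)
      simp only []
      rw [min_eq_left hst, rpow_neg_two_eq hs0, div_eq_mul_inv]
  rw [hI1, hI2]

/-- **Almost negative definiteness of the logarithmic interaction matrix on the zero-sum
hyperplane**: for `γ > 1` there is `C > 0` such that for all `N ≥ 2` and all `η` with
pairwise gaps at least `N^{−γ}`, the matrix `M_{kj} = (1/N)·ln|η_k − η_j|` (zero diagonal)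
satisfies `⟨x, Mx⟩ ≤ C (ln N / N) ‖x‖²` on `{x : ∑ x_k = 0}`. -/
theorem log_matrix_almost_negative (γ : ℝ) (hγ : 1 < γ) :
    ∃ C : ℝ, 0 < C ∧ ∀ N : ℕ, 2 ≤ N → ∀ eta : Fin N → ℝ,
      (∀ a b : Fin N, a ≠ b → (N : ℝ) ^ (-γ) ≤ |eta a - eta b|) →
      ∀ x : Fin N → ℝ, (∑ k, x k) = 0 →
        (∑ k, ∑ j, x k * (if k = j then 0 else (1 / N) * Real.log |eta k - eta j|) * x j) ≤
          C * (Real.log N / N) * ∑ k, (x k) ^ 2 := by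
  refine ⟨γ + 2, by linarith, fun N hN eta hsep x hx => ?_⟩
  have hN2 : (2:ℝ) ≤ (N:ℝ) := by exact_mod_cast hN
  have hNpos : (0:ℝ) < N := by linarith
  set δ : ℝ := (N : ℝ) ^ (-γ) with hδdef
  have hδ : 0 < δ := Real.rpow_pos_of_pos hNpos _
  have hlogδ : Real.log δ = -γ * Real.log N := Real.log_rpow hNpos _
  have hlogN : (1:ℝ)/2 ≤ Real.log N := by
    have h2 : Real.log 2 ≤ Real.log N := Real.log_le_log (by norm_num) hN2
    have := Real.log_two_gt_d9
    linarith
  -- the regularized kernel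
  set A : Fin N → Fin N → ℝ :=
    fun k j => ∫ s in Ioi δ, min |eta k - eta j| s / s^2 with hA
  have hAdiag : ∀ k : Fin N, A k k = 0 := by
    intro k
    rw [hA]; simp only [sub_self, abs_zero]
    rw [setIntegral_congr_fun measurableSet_Ioi (g := fun _ : ℝ => (0:ℝ)) ?_]
    · exact integral_zero _ _
    · intro s hs
      have : (0:ℝ) < s := lt_trans hδ (mem_Ioi.mp hs)
      simp only []
      rw [min_eq_left this.le, zero_div]
  -- per-term decomposition
  have hterm : ∀ k j : Fin N,
      (if k = j then 0 else x k * x j * Real.log |eta k - eta j|)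
        = x k * x j * A k j + (if k = j then (0:ℝ) else (Real.log δ - 1) * (x k * x j)) := by
    intro k j
    by_cases h : k = j
    · simp [h, hAdiag]
    · simp only [h, if_false]
      have hsep' := hsep k j h
      have : A k j = Real.log |eta k - eta j| - Real.log δ + 1 :=
        min_div_integral hδ hsep'
      rw [this]; ring
  -- the CND part is nonpositive
  have hS1 : ∑ k : Fin N, ∑ j : Fin N, x k * x j * A k j ≤ 0 := by
    have hint : ∀ k j : Fin N, IntegrableOn
        (fun s : ℝ => x k * x j * (min |eta k - eta j| s / s^2)) (Ioi δ) :=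
      fun k j => (integrableOn_min_div hδ (abs_nonneg _)).const_mul _
    have hswap : ∑ k : Fin N, ∑ j : Fin N, x k * x j * A k j
        = ∫ s in Ioi δ, ∑ k : Fin N, ∑ j : Fin N,
            x k * x j * (min |eta k - eta j| s / s^2) := by
      rw [integral_finset_sum _ fun k _ => integrable_finset_sum _ fun j _ => hint k j]
      refine Finset.sum_congr rfl fun k _ => ?_
      rw [integral_finset_sum _ fun j _ => hint k j]
      refine Finset.sum_congr rfl fun j _ => ?_
      rw [hA, MeasureTheory.integral_const_mul]
    rw [hswap]
    refine setIntegral_nonpos measurableSet_Ioi fun s hs => ?_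
    have hs0 : 0 < s := lt_trans hδ (mem_Ioi.mp hs)
    have hpt : ∀ k j : Fin N, x k * x j * (min |eta k - eta j| s / s^2)
        = (x k * x j * min |eta k - eta j| s) * (s^2)⁻¹ := fun k j => by ring
    simp_rw [hpt, ← Finset.sum_mul]
    exact mul_nonpos_of_nonpos_of_nonneg (min_cnd x eta hx s)
      (inv_nonneg.2 (sq_nonneg s))
  -- the constant part
  have hS2 : ∑ k : Fin N, ∑ j : Fin N,
      (if k = j then (0:ℝ) else (Real.log δ - 1) * (x k * x j))
      = (1 - Real.log δ) * ∑ k, (x k)^2 := by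
    have hrow : ∀ k : Fin N, ∑ j : Fin N,
        (if k = j then (0:ℝ) else (Real.log δ - 1) * (x k * x j))
        = (Real.log δ - 1) * (x k * ∑ j, x j) - (Real.log δ - 1) * (x k)^2 := by
      intro k
      have : ∀ j : Fin N, (if k = j then (0:ℝ) else (Real.log δ - 1) * (x k * x j))
          = (Real.log δ - 1) * (x k * x j)
            - (if k = j then (Real.log δ - 1) * (x k * x j) else 0) := by
        intro j; split_ifs <;> ring
      simp_rw [this, Finset.sum_sub_distrib, Finset.sum_ite_eq, Finset.mem_univ, if_true,
        ← Finset.mul_sum]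
      ring_nf
    calc ∑ k : Fin N, ∑ j : Fin N,
        (if k = j then (0:ℝ) else (Real.log δ - 1) * (x k * x j))
        = ∑ k : Fin N, ((Real.log δ - 1) * (x k * ∑ j, x j)
            - (Real.log δ - 1) * (x k)^2) :=
          Finset.sum_congr rfl fun k _ => hrow k
      _ = (1 - Real.log δ) * ∑ k, (x k)^2 := by
          simp_rw [hx, mul_zero, zero_sub, Finset.sum_neg_distrib, ← Finset.mul_sum]
          ring
  -- combine
  have hT : ∑ k : Fin N, ∑ j : Fin N,
      (if k = j then 0 else x k * x j * Real.log |eta k - eta j|)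
      ≤ (γ + 2) * Real.log N * ∑ k, (x k)^2 := by
    simp_rw [hterm, Finset.sum_add_distrib]
    rw [hS2]
    have hsq : (0:ℝ) ≤ ∑ k, (x k)^2 := Finset.sum_nonneg fun k _ => sq_nonneg _
    have : (1 - Real.log δ) ≤ (γ + 2) * Real.log N := by
      rw [hlogδ]; nlinarith
    nlinarith [mul_le_mul_of_nonneg_right this hsq]
  -- rescale
  have hgoal_rw : ∀ k j : Fin N,
      x k * (if k = j then 0 else (1/(N:ℝ)) * Real.log |eta k - eta j|) * x j
      = (1/(N:ℝ)) * (if k = j then 0 else x k * x j * Real.log |eta k - eta j|) := by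
    intro k j; split_ifs <;> ring
  simp_rw [hgoal_rw, ← Finset.mul_sum]
  rw [show (γ + 2) * (Real.log N / N) * ∑ k, (x k)^2
      = (1/(N:ℝ)) * ((γ + 2) * Real.log N * ∑ k, (x k)^2) by ring]
  exact mul_le_mul_of_nonneg_left hT (by positivity)
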